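/- Let (α, ≤) be a partial order in which, for every element v, the set {x : x ≤ v} of elements below v is a chain (i.e., any two elements below a common element are comparable). Let u_1, …, u_m be elements of α such that for all indices s < t it is not the case that u_s < u_t. For each t with 1 ≤ t ≤ m define V_t = {v ∈ α : u_t ≤ v and there is no s < t with u_t ≤ u_s ≤ v}. Then the sets V_1, …, V_m are pairwise disjoint. -/
import Mathlib


/-- In a partial order where the set of elements below any element is a
chain (the ancestor order of a rooted tree), if `u 1, …, u m` satisfy that no earlier
element is strictly below a later one, then the sets
`V t = {v | u t ≤ v ∧ ¬∃ s < t, u t ≤ u s ≤ v}` are pairwise disjoint. -/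
theorem marking_visits_disjoint
    {α : Type*} [PartialOrder α]
    (hchain : ∀ v x y : α, x ≤ v → y ≤ v → x ≤ y ∨ y ≤ x)
    (m : ℕ) (u : Fin m → α)
    (hu : ∀ s t : Fin m, s < t → ¬ u s < u t) :
    ∀ s t : Fin m, s ≠ t →
      Disjoint
        ({v : α | u s ≤ v ∧ ¬ ∃ r : Fin m, r < s ∧ u s ≤ u r ∧ u r ≤ v} : Set α)
        ({v : α | u t ≤ v ∧ ¬ ∃ r : Fin m, r < t ∧ u t ≤ u r ∧ u r ≤ v} : Set α) := by
  have key : ∀ s t : Fin m, s < t →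
      Disjoint
        ({v : α | u s ≤ v ∧ ¬ ∃ r : Fin m, r < s ∧ u s ≤ u r ∧ u r ≤ v} : Set α)
        ({v : α | u t ≤ v ∧ ¬ ∃ r : Fin m, r < t ∧ u t ≤ u r ∧ u r ≤ v} : Set α) := by
    intro s t hst
    rw [Set.disjoint_left]
    rintro v ⟨hsv, -⟩ ⟨htv, hn⟩
    rcases hchain v (u s) (u t) hsv htv with h | h
    · rcases eq_or_lt_of_le h with heq | hlt
      · exact hn ⟨s, hst, heq ▸ le_refl _, hsv⟩
      · exact hu s t hst hlt
    · exact hn ⟨s, hst, h, hsv⟩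
  intro s t hst
  rcases lt_or_gt_of_ne hst with h | h
  · exact key s t h
  · exact (key t s h).symm
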